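/- Cut-free completeness by induction on size: for every n and sequent Γ, Δ with sizes Γ Δ ≤ n, if Γ semantically entails Δ (every valuation satisfying Γ validates Δ), then Γ ⊃c Δ is derivable in the cut-free sequent calculus. -/

import Mathlib

inductive PropF (V : Type) : Type
  | Var : V → PropF V
  | Bot : PropF V
  | Conj : PropF V → PropF V → PropF V
  | Disj : PropF V → PropF V → PropF V
  | Impl : PropF V → PropF V → PropF V
deriving DecidableEq

variable {V : Type} [DecidableEq V]

def PropF.Neg (A : PropF V) : PropF V := A.Impl .Bot
def PropF.Top : PropF V := PropF.Neg .Bot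

def TrueQ (v : V → Bool) : PropF V → Bool
  | .Var p => v p
  | .Bot => false
  | .Conj B C => TrueQ v B && TrueQ v C
  | .Disj B C => TrueQ v B || TrueQ v C
  | .Impl B C => !(TrueQ v B) || TrueQ v C

def Satisfies (v : V → Bool) (Γ : List (PropF V)) : Prop := ∀ A ∈ Γ, TrueQ v A = true
def Models (Γ : List (PropF V)) (A : PropF V) : Prop := ∀ v, Satisfies v Γ → TrueQ v A = true
def Valid (A : PropF V) : Prop := Models [] A
def Validates (v : V → Bool) (Δ : List (PropF V)) : Prop := ∃ A ∈ Δ, TrueQ v A = true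

inductive Nc : List (PropF V) → PropF V → Prop
  | Nax (Γ : List (PropF V)) (A : PropF V) : A ∈ Γ → Nc Γ A
  | ImpI (Γ : List (PropF V)) (A B : PropF V) : Nc (A :: Γ) B → Nc Γ (A.Impl B)
  | ImpE (Γ : List (PropF V)) (A B : PropF V) : Nc Γ (A.Impl B) → Nc Γ A → Nc Γ B
  | BotC (Γ : List (PropF V)) (A : PropF V) : Nc (A.Neg :: Γ) .Bot → Nc Γ A
  | AndI (Γ : List (PropF V)) (A B : PropF V) : Nc Γ A → Nc Γ B → Nc Γ (A.Conj B)
  | AndE1 (Γ : List (PropF V)) (A B : PropF V) : Nc Γ (A.Conj B) → Nc Γ A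
  | AndE2 (Γ : List (PropF V)) (A B : PropF V) : Nc Γ (A.Conj B) → Nc Γ B
  | OrI1 (Γ : List (PropF V)) (A B : PropF V) : Nc Γ A → Nc Γ (A.Disj B)
  | OrI2 (Γ : List (PropF V)) (A B : PropF V) : Nc Γ B → Nc Γ (A.Disj B)
  | OrE (Γ : List (PropF V)) (A B C : PropF V) : Nc Γ (A.Disj B) → Nc (A :: Γ) C → Nc (B :: Γ) C → Nc Γ C

def Provable (A : PropF V) : Prop := Nc [] A

inductive NNF (V : Type) : Type
  | NPos : V → NNF V
  | NNeg : V → NNF V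
  | NBot : NNF V
  | NTop : NNF V
  | NConj : NNF V → NNF V → NNF V
  | NDisj : NNF V → NNF V → NNF V
deriving DecidableEq

def NNFtoPropF : NNF V → PropF V
  | .NPos p => .Var p
  | .NNeg p => (PropF.Var p).Neg
  | .NBot => .Bot
  | .NTop => PropF.Top
  | .NConj B C => (NNFtoPropF B).Conj (NNFtoPropF C)
  | .NDisj B C => (NNFtoPropF B).Disj (NNFtoPropF C)

mutual
def MakeNNF : PropF V → NNF V
  | .Var p => .NPos p
  | .Bot => .NBot
  | .Disj B C => .NDisj (MakeNNF B) (MakeNNF C)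
  | .Conj B C => .NConj (MakeNNF B) (MakeNNF C)
  | .Impl B C => .NDisj (MakeNNFN B) (MakeNNF C)
def MakeNNFN : PropF V → NNF V
  | .Var p => .NNeg p
  | .Bot => .NTop
  | .Disj B C => .NConj (MakeNNFN B) (MakeNNFN C)
  | .Conj B C => .NDisj (MakeNNFN B) (MakeNNFN C)
  | .Impl B C => .NConj (MakeNNF B) (MakeNNFN C)
end

inductive Lit (V : Type) : Type
  | LPos : V → Lit V
  | LNeg : V → Lit V
  | LBot : Lit V
  | LTop : Lit V
deriving DecidableEq

def LiteraltoPropF : Lit V → PropF V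
  | .LPos p => .Var p
  | .LNeg p => (PropF.Var p).Neg
  | .LBot => .Bot
  | .LTop => PropF.Top

abbrev Clause (V : Type) : Type := List (Lit V)
abbrev CNF (V : Type) : Type := List (Clause V)

abbrev ClausetoPropF (l : Clause V) : PropF V :=
  l.foldr (fun a r => (LiteraltoPropF a).Disj r) .Bot

def CNFtoPropF (ll : CNF V) : PropF V :=
  ll.foldr (fun c r => (ClausetoPropF c).Conj r) PropF.Top

def AddClause (l : Clause V) (ll : CNF V) : CNF V := ll.map (fun l2 => l ++ l2)
def Disjunct (ll ll2 : CNF V) : CNF V := ll.flatMap (fun l => AddClause l ll2)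

def MakeCNF : NNF V → CNF V
  | .NPos p => [[.LPos p]]
  | .NNeg p => [[.LNeg p]]
  | .NBot => [[.LBot]]
  | .NTop => [[.LTop]]
  | .NConj B C => MakeCNF B ++ MakeCNF C
  | .NDisj B C => Disjunct (MakeCNF B) (MakeCNF C)

def Valid_Clause (l : Clause V) : Prop :=
  Lit.LTop ∈ l ∨ ∃ p, Lit.LPos p ∈ l ∧ Lit.LNeg p ∈ l
def Valid_CNF (ll : CNF V) : Prop := ∀ l ∈ ll, Valid_Clause l

inductive AxiomH : PropF V → Prop
  | HOrI1 (A B : PropF V) : AxiomH (A.Impl (A.Disj B))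
  | HOrI2 (A B : PropF V) : AxiomH (B.Impl (A.Disj B))
  | HAndI (A B : PropF V) : AxiomH (A.Impl (B.Impl (A.Conj B)))
  | HOrE (A B C : PropF V) : AxiomH ((A.Disj B).Impl ((A.Impl C).Impl ((B.Impl C).Impl C)))
  | HAndE1 (A B : PropF V) : AxiomH ((A.Conj B).Impl A)
  | HAndE2 (A B : PropF V) : AxiomH ((A.Conj B).Impl B)
  | HS (A B C : PropF V) : AxiomH ((A.Impl (B.Impl C)).Impl ((A.Impl B).Impl (A.Impl C)))
  | HK (A B : PropF V) : AxiomH (A.Impl (B.Impl A))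
  | HClas (A : PropF V) : AxiomH ((A.Neg.Neg).Impl A)

inductive Hc : List (PropF V) → PropF V → Prop
  | Hass (A : PropF V) (Γ : List (PropF V)) : A ∈ Γ → Hc Γ A
  | Hax (A : PropF V) (Γ : List (PropF V)) : AxiomH A → Hc Γ A
  | HImpE (Γ : List (PropF V)) (A B : PropF V) : Hc Γ (A.Impl B) → Hc Γ A → Hc Γ B

inductive G : List (PropF V) → List (PropF V) → Prop
  | Gax (A : PropF V) (Γ Δ : List (PropF V)) : A ∈ Γ → A ∈ Δ → G Γ Δ
  | GBot (Γ Δ : List (PropF V)) : PropF.Bot ∈ Γ → G Γ Δ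
  | AndL (A B : PropF V) (Γ1 Γ2 Δ : List (PropF V)) : G (Γ1 ++ A :: B :: Γ2) Δ → G (Γ1 ++ (A.Conj B) :: Γ2) Δ
  | AndR (A B : PropF V) (Γ Δ1 Δ2 : List (PropF V)) : G Γ (Δ1 ++ A :: Δ2) → G Γ (Δ1 ++ B :: Δ2) → G Γ (Δ1 ++ (A.Conj B) :: Δ2)
  | OrL (A B : PropF V) (Γ1 Γ2 Δ : List (PropF V)) : G (Γ1 ++ A :: Γ2) Δ → G (Γ1 ++ B :: Γ2) Δ → G (Γ1 ++ (A.Disj B) :: Γ2) Δ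
  | OrR (A B : PropF V) (Γ Δ1 Δ2 : List (PropF V)) : G Γ (Δ1 ++ A :: B :: Δ2) → G Γ (Δ1 ++ (A.Disj B) :: Δ2)
  | ImpL (A B : PropF V) (Γ1 Γ2 Δ : List (PropF V)) : G (Γ1 ++ B :: Γ2) Δ → G (Γ1 ++ Γ2) (A :: Δ) → G (Γ1 ++ (A.Impl B) :: Γ2) Δ
  | ImpR (A B : PropF V) (Γ Δ1 Δ2 : List (PropF V)) : G (A :: Γ) (Δ1 ++ B :: Δ2) → G Γ (Δ1 ++ (A.Impl B) :: Δ2)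
  | Cut (A : PropF V) (Γ Δ : List (PropF V)) : G Γ (A :: Δ) → G (A :: Γ) Δ → G Γ Δ

inductive Gcf : List (PropF V) → List (PropF V) → Prop
  | Gax (p : V) (Γ Δ : List (PropF V)) : PropF.Var p ∈ Γ → PropF.Var p ∈ Δ → Gcf Γ Δ
  | GBot (Γ Δ : List (PropF V)) : PropF.Bot ∈ Γ → Gcf Γ Δ
  | AndL (A B : PropF V) (Γ1 Γ2 Δ : List (PropF V)) : Gcf (Γ1 ++ A :: B :: Γ2) Δ → Gcf (Γ1 ++ (A.Conj B) :: Γ2) Δ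
  | AndR (A B : PropF V) (Γ Δ1 Δ2 : List (PropF V)) : Gcf Γ (Δ1 ++ A :: Δ2) → Gcf Γ (Δ1 ++ B :: Δ2) → Gcf Γ (Δ1 ++ (A.Conj B) :: Δ2)
  | OrL (A B : PropF V) (Γ1 Γ2 Δ : List (PropF V)) : Gcf (Γ1 ++ A :: Γ2) Δ → Gcf (Γ1 ++ B :: Γ2) Δ → Gcf (Γ1 ++ (A.Disj B) :: Γ2) Δ
  | OrR (A B : PropF V) (Γ Δ1 Δ2 : List (PropF V)) : Gcf Γ (Δ1 ++ A :: B :: Δ2) → Gcf Γ (Δ1 ++ (A.Disj B) :: Δ2)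
  | ImpL (A B : PropF V) (Γ1 Γ2 Δ : List (PropF V)) : Gcf (Γ1 ++ B :: Γ2) Δ → Gcf (Γ1 ++ Γ2) (A :: Δ) → Gcf (Γ1 ++ (A.Impl B) :: Γ2) Δ
  | ImpR (A B : PropF V) (Γ Δ1 Δ2 : List (PropF V)) : Gcf (A :: Γ) (Δ1 ++ B :: Δ2) → Gcf Γ (Δ1 ++ (A.Impl B) :: Δ2)

def BigOr (Δ : List (PropF V)) : PropF V := Δ.foldr PropF.Disj .Bot

def size : PropF V → Nat
  | .Var _ => 0
  | .Bot => 0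
  | .Conj B C => (size B + size C).succ
  | .Disj B C => (size B + size C).succ
  | .Impl B C => (size B + size C).succ

def sizel (Γ : List (PropF V)) : Nat := (Γ.map size).sum
def sizes (Γ Δ : List (PropF V)) : Nat := sizel Γ + sizel Δ


def IsAt : PropF V → Prop
  | .Var _ => True
  | .Bot => True
  | _ => False

lemma split_atoms (Γ : List (PropF V)) :
    (∀ A ∈ Γ, IsAt A) ∨ ∃ Γ1 A Γ2, Γ = Γ1 ++ A :: Γ2 ∧ ¬ IsAt A := by
  induction Γ with
  | nil => exact Or.inl (by simp)
  | cons A Γ ih =>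
    by_cases hA : IsAt A
    · rcases ih with h | ⟨Γ1, B, Γ2, rfl, hB⟩
      · left; intro C hC
        rcases List.mem_cons.mp hC with rfl | h'
        · exact hA
        · exact h C h'
      · exact Or.inr ⟨A :: Γ1, B, Γ2, rfl, hB⟩
    · exact Or.inr ⟨[], A, Γ, rfl, hA⟩

lemma sat_middle {v : V → Bool} {Γ1 Γ2 : List (PropF V)} {A : PropF V} :
    Satisfies v (Γ1 ++ A :: Γ2) ↔ TrueQ v A = true ∧ Satisfies v (Γ1 ++ Γ2) := by
  simp only [Satisfies, List.mem_append, List.mem_cons]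
  constructor
  · intro h
    refine ⟨h A (Or.inr (Or.inl rfl)), fun B hB => h B ?_⟩
    tauto
  · rintro ⟨hA, h⟩ B hB
    rcases hB with h1 | rfl | h3
    · exact h B (Or.inl h1)
    · exact hA
    · exact h B (Or.inr h3)

lemma val_middle {v : V → Bool} {Δ1 Δ2 : List (PropF V)} {A : PropF V} :
    Validates v (Δ1 ++ A :: Δ2) ↔ TrueQ v A = true ∨ Validates v (Δ1 ++ Δ2) := by
  simp only [Validates, List.mem_append, List.mem_cons]
  constructor
  · rintro ⟨B, (h1 | rfl | h3), hT⟩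
    · exact Or.inr ⟨B, Or.inl h1, hT⟩
    · exact Or.inl hT
    · exact Or.inr ⟨B, Or.inr h3, hT⟩
  · rintro (hA | ⟨B, hB, hT⟩)
    · exact ⟨A, Or.inr (Or.inl rfl), hA⟩
    · exact ⟨B, by tauto, hT⟩

lemma atomic_case (Γ Δ : List (PropF V)) (hΓ : ∀ A ∈ Γ, IsAt A) (hΔ : ∀ A ∈ Δ, IsAt A)
    (h : ∀ v, Satisfies v Γ → Validates v Δ) : Gcf Γ Δ := by
  by_cases hb : PropF.Bot ∈ Γ
  · exact .GBot Γ Δ hb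
  · classical
    set v : V → Bool := fun p => decide (PropF.Var p ∈ Γ) with hv
    have hsat : Satisfies v Γ := by
      intro A hA
      have hat := hΓ A hA
      cases A with
      | Var p => simpa [TrueQ, hv] using hA
      | Bot => exact absurd hA hb
      | Conj B C => simp [IsAt] at hat
      | Disj B C => simp [IsAt] at hat
      | Impl B C => simp [IsAt] at hat
    obtain ⟨A, hA, hT⟩ := h v hsat
    have hat := hΔ A hA
    cases A with
    | Var p =>
      have hp : PropF.Var p ∈ Γ := by simpa [TrueQ, hv] using hT
      exact .Gax p Γ Δ hp hA
    | Bot => simp [TrueQ] at hT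
    | Conj B C => simp [IsAt] at hat
    | Disj B C => simp [IsAt] at hat
    | Impl B C => simp [IsAt] at hat

lemma main_cf : ∀ (n : ℕ) (Γ Δ : List (PropF V)), sizes Γ Δ ≤ n →
    (∀ v, Satisfies v Γ → Validates v Δ) → Gcf Γ Δ := by
  intro n
  induction n using Nat.strong_induction_on with
  | _ n ih =>
    intro Γ Δ hs h
    rcases split_atoms Γ with hΓ | ⟨Γ1, A, Γ2, rfl, hA⟩
    · rcases split_atoms Δ with hΔ | ⟨Δ1, A, Δ2, rfl, hA⟩
      · exact atomic_case Γ Δ hΓ hΔ h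
      · -- compound on the right
        cases A with
        | Var p => exact absurd trivial hA
        | Bot => exact absurd trivial hA
        | Conj B C =>
          have hsz : sizes Γ (Δ1 ++ (B.Conj C) :: Δ2) ≥ 1 := by
            simp [sizes, sizel, size]; omega
          apply Gcf.AndR
          · apply ih (sizes Γ (Δ1 ++ B :: Δ2)) ?_ _ _ le_rfl
            · intro v hv
              rcases val_middle.mp (h v hv) with hBC | hval
            <;> [skip; exact val_middle.mpr (Or.inr hval)]
              exact val_middle.mpr (Or.inl (by simp [TrueQ] at hBC; exact hBC.1))
            · simp only [sizes, sizel, size, List.map_append, List.sum_append,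
                List.map_cons, List.sum_cons] at hs ⊢
              omega
          · apply ih (sizes Γ (Δ1 ++ C :: Δ2)) ?_ _ _ le_rfl
            · intro v hv
              rcases val_middle.mp (h v hv) with hBC | hval
            <;> [skip; exact val_middle.mpr (Or.inr hval)]
              exact val_middle.mpr (Or.inl (by simp [TrueQ] at hBC; exact hBC.2))
            · simp only [sizes, sizel, size, List.map_append, List.sum_append,
                List.map_cons, List.sum_cons] at hs ⊢
              omega
        | Disj B C =>
          apply Gcf.OrR
          apply ih (sizes Γ (Δ1 ++ B :: C :: Δ2)) ?_ _ _ le_rfl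
          · intro v hv
            rcases val_middle.mp (h v hv) with hBC | hval
            · simp [TrueQ] at hBC
              rcases hBC with hB | hC
              · exact val_middle.mpr (Or.inl hB)
              · exact val_middle.mpr (Or.inr (val_middle.mpr (Or.inl hC)))
            · exact val_middle.mpr (Or.inr (val_middle.mpr (Or.inr hval)))
          · simp only [sizes, sizel, size, List.map_append, List.sum_append,
              List.map_cons, List.sum_cons] at hs ⊢
            omega
        | Impl B C =>
          apply Gcf.ImpR
          apply ih (sizes (B :: Γ) (Δ1 ++ C :: Δ2)) ?_ _ _ le_rfl
          · intro v hv
            have hB : TrueQ v B = true := hv B (List.mem_cons_self)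
            have hΓ' : Satisfies v Γ := fun X hX => hv X (List.mem_cons_of_mem _ hX)
            rcases val_middle.mp (h v hΓ') with hBC | hval
            · simp [TrueQ, hB] at hBC
              exact val_middle.mpr (Or.inl hBC)
            · exact val_middle.mpr (Or.inr hval)
          · simp only [sizes, sizel, size, List.map_append, List.sum_append,
              List.map_cons, List.sum_cons] at hs ⊢
            omega
    · -- compound on the left
      cases A with
      | Var p => exact absurd trivial hA
      | Bot => exact absurd trivial hA
      | Conj B C =>
        apply Gcf.AndL
        apply ih (sizes (Γ1 ++ B :: C :: Γ2) Δ) ?_ _ _ le_rfl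
        · intro v hv
          obtain ⟨hB, hv2⟩ := sat_middle.mp hv
          obtain ⟨hC, hv3⟩ := sat_middle.mp hv2
          exact h v (sat_middle.mpr ⟨by simp [TrueQ, hB, hC], hv3⟩)
        · simp only [sizes, sizel, size, List.map_append, List.sum_append,
            List.map_cons, List.sum_cons] at hs ⊢
          omega
      | Disj B C =>
        apply Gcf.OrL
        · apply ih (sizes (Γ1 ++ B :: Γ2) Δ) ?_ _ _ le_rfl
          · intro v hv
            obtain ⟨hB, hv2⟩ := sat_middle.mp hv
            exact h v (sat_middle.mpr ⟨by simp [TrueQ, hB], hv2⟩)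
          · simp only [sizes, sizel, size, List.map_append, List.sum_append,
              List.map_cons, List.sum_cons] at hs ⊢
            omega
        · apply ih (sizes (Γ1 ++ C :: Γ2) Δ) ?_ _ _ le_rfl
          · intro v hv
            obtain ⟨hC, hv2⟩ := sat_middle.mp hv
            exact h v (sat_middle.mpr ⟨by simp [TrueQ, hC], hv2⟩)
          · simp only [sizes, sizel, size, List.map_append, List.sum_append,
              List.map_cons, List.sum_cons] at hs ⊢
            omega
      | Impl B C =>
        apply Gcf.ImpL
        · apply ih (sizes (Γ1 ++ C :: Γ2) Δ) ?_ _ _ le_rfl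
          · intro v hv
            obtain ⟨hC, hv2⟩ := sat_middle.mp hv
            exact h v (sat_middle.mpr ⟨by simp [TrueQ, hC], hv2⟩)
          · simp only [sizes, sizel, size, List.map_append, List.sum_append,
              List.map_cons, List.sum_cons] at hs ⊢
            omega
        · apply ih (sizes (Γ1 ++ Γ2) (B :: Δ)) ?_ _ _ le_rfl
          · intro v hv
            by_cases hB : TrueQ v B = true
            · exact ⟨B, List.mem_cons_self, hB⟩
            · have hB' : TrueQ v B = false := by
                cases hq : TrueQ v B
                · rfl
                · exact absurd hq hB
              obtain ⟨X, hX, hT⟩ := h v (sat_middle.mpr ⟨by simp [TrueQ, hB'], hv⟩)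
              exact ⟨X, List.mem_cons_of_mem _ hX, hT⟩
          · simp only [sizes, sizel, size, List.map_append, List.sum_append,
              List.map_cons, List.sum_cons] at hs ⊢
            omega

theorem stmt17 {V : Type} [DecidableEq V] (n : ℕ) (Γ Δ : List (PropF V))
    (hs : sizes Γ Δ ≤ n) (h : ∀ v, Satisfies v Γ → Validates v Δ) : Gcf Γ Δ := main_cf n Γ Δ hs h
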